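/- Let (Ω, μ) be a probability space with events A (history of SARS-CoV-2 infection), Y (PASC status), and X (presence of a symptom). Assume: (i) setting α = μ(A), 0 < α < 1; (ii) μ(Y | Aᶜ) = 0; (iii) setting π = μ(Y | A), 0 < π < 1; (iv) conditionally on Y and conditionally on Yᶜ, the events X and A are independent; (v) setting β0 = μ(X | Yᶜ), 0 < β0 < 1, and 0 < μ(X) < 1. Let β1 = μ(X | Y)/μ(X | Yᶜ). Then θ1 = μ(A | X) satisfies θ1 = (β0·β1·π + β0·(1−π)) / (β0·β1·π + β0·(α⁻¹ − π)), and θ0 = μ(A | Xᶜ) satisfies θ0 = ((1−β0·β1)·π + (1−β0)·(1−π)) / ((1−β0·β1)·π + (1−β0)·(α⁻¹ − π)). -/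

import Mathlib

open MeasureTheory

/-- Conditional probability `μ(E | F) = μ(E ∩ F) / μ(F)`, as a real number. -/
noncomputable def cpr {Ω : Type*} [MeasurableSpace Ω] (μ : Measure Ω) (E F : Set Ω) : ℝ :=
  (μ (E ∩ F)).toReal / (μ F).toReal

/-- Intermediate step of Theorem 1: explicit formulas for
`θ1 = μ(A | X)` and `θ0 = μ(A | Xᶜ)` in terms of `α`, `π`, `β0`, `β1`. -/
theorem theta_formulas
    {Ω : Type*} [MeasurableSpace Ω] (μ : Measure Ω) [IsProbabilityMeasure μ]
    (A Y X : Set Ω)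
    (hAm : MeasurableSet A) (hYm : MeasurableSet Y) (hXm : MeasurableSet X)
    -- (i) α = μ(A), 0 < α < 1
    (α : ℝ) (hαdef : α = (μ A).toReal) (hα0 : 0 < α) (hα1 : α < 1)
    -- (ii) μ(Y | Aᶜ) = 0
    (hProp1 : cpr μ Y Aᶜ = 0)
    -- (iii) π = μ(Y | A), 0 < π < 1
    (π : ℝ) (hπdef : π = cpr μ Y A) (hπ0 : 0 < π) (hπ1 : π < 1)
    -- (iv) X ⫫ A conditionally on Y and on Yᶜ
    (hProp2 : cpr μ (X ∩ A) Y = cpr μ X Y * cpr μ A Y)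
    (hProp2c : cpr μ (X ∩ A) Yᶜ = cpr μ X Yᶜ * cpr μ A Yᶜ)
    -- (v) β0 = μ(X | Yᶜ), 0 < β0 < 1, and 0 < μ(X) < 1
    (β0 : ℝ) (hβ0def : β0 = cpr μ X Yᶜ) (hβ00 : 0 < β0) (hβ01 : β0 < 1)
    (hX0 : 0 < (μ X).toReal) (hX1 : (μ X).toReal < 1)
    -- β1
    (β1 : ℝ) (hβ1def : β1 = cpr μ X Y / cpr μ X Yᶜ) :
    cpr μ A X =
      (β0 * β1 * π + β0 * (1 - π)) / (β0 * β1 * π + β0 * (α⁻¹ - π)) ∧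
    cpr μ A Xᶜ =
      ((1 - β0 * β1) * π + (1 - β0) * (1 - π)) /
        ((1 - β0 * β1) * π + (1 - β0) * (α⁻¹ - π)) := by
  have hα : (μ A).toReal = α := hαdef.symm
  have hα' : α ≠ 0 := ne_of_gt hα0
  have hadd : ∀ s : Set Ω, MeasurableSet s → (μ s).toReal + (μ sᶜ).toReal = 1 := by
    intro s hs
    have h := measure_add_measure_compl (μ := μ) hs
    have h2 := congrArg ENNReal.toReal h
    rwa [ENNReal.toReal_add (measure_ne_top μ s) (measure_ne_top μ sᶜ), measure_univ,
      ENNReal.toReal_one] at h2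
  have tadd : ∀ s t : Set Ω, MeasurableSet t →
      (μ (s ∩ t)).toReal + (μ (s ∩ tᶜ)).toReal = (μ s).toReal := by
    intro s t ht
    have h := measure_inter_add_diff (μ := μ) s ht
    have h2 := congrArg ENNReal.toReal h
    rw [ENNReal.toReal_add (measure_ne_top _ _) (measure_ne_top _ _)] at h2
    rwa [← Set.diff_eq]
  have hAc : (μ Aᶜ).toReal = 1 - α := by
    have h := hadd A hAm; rw [hα] at h; linarith
  have hY0 : (μ (Y ∩ Aᶜ)).toReal = 0 := by
    have h := hProp1
    rw [cpr, hAc] at h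
    have hne : (1:ℝ) - α ≠ 0 := by linarith
    exact (div_eq_zero_iff.mp h).resolve_right hne
  have hYA : (μ (Y ∩ A)).toReal = π * α := by
    rw [hπdef, cpr, hα]; field_simp
  have hY : (μ Y).toReal = π * α := by
    have h := tadd Y A hAm; rw [hY0, hYA] at h; linarith
  have hYc : (μ Yᶜ).toReal = 1 - π * α := by
    have h := hadd Y hYm; rw [hY] at h; linarith
  have hπα0 : π * α ≠ 0 := by positivity
  have hπα1 : (1:ℝ) - π * α ≠ 0 := by nlinarith
  have hAY : (μ (A ∩ Y)).toReal = π * α := by rw [Set.inter_comm]; exact hYA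
  have hAYc : (μ (A ∩ Yᶜ)).toReal = α - π * α := by
    have h := tadd A Y hYm; rw [hAY, hα] at h; linarith
  have cprAY : cpr μ A Y = 1 := by rw [cpr, hAY, hY]; exact div_self hπα0
  have cprAYc : cpr μ A Yᶜ = (α - π * α) / (1 - π * α) := by rw [cpr, hAYc, hYc]
  have hβ0' : β0 ≠ 0 := ne_of_gt hβ00
  have cprXY : cpr μ X Y = β0 * β1 := by
    rw [hβ1def, ← hβ0def]; field_simp
  have hXY : (μ (X ∩ Y)).toReal = β0 * β1 * (π * α) := by
    have h := cprXY; rw [cpr, hY] at h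
    exact (div_eq_iff hπα0).mp h
  have hXYc : (μ (X ∩ Yᶜ)).toReal = β0 * (1 - π * α) := by
    have h := hβ0def; rw [cpr, hYc] at h
    exact (div_eq_iff hπα1).mp h.symm
  have hXAY : (μ (X ∩ A ∩ Y)).toReal = β0 * β1 * (π * α) := by
    have h := hProp2; rw [cprXY, cprAY, cpr, hY, mul_one] at h
    exact (div_eq_iff hπα0).mp h
  have hXAYc : (μ (X ∩ A ∩ Yᶜ)).toReal = β0 * (α - π * α) := by
    have h := hProp2c; rw [← hβ0def, cprAYc, cpr, hYc] at h
    have h2 := (div_eq_iff hπα1).mp h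
    rw [h2]; field_simp
    exact mul_div_cancel_right₀ _ (by rw [mul_comm α π]; exact hπα1)
  have hXA : (μ (X ∩ A)).toReal = β0 * β1 * (π * α) + β0 * (α - π * α) := by
    have h := tadd (X ∩ A) Y hYm; rw [hXAY, hXAYc] at h; linarith
  have hAX : (μ (A ∩ X)).toReal = β0 * β1 * (π * α) + β0 * (α - π * α) := by
    rw [Set.inter_comm]; exact hXA
  have hXv : (μ X).toReal = β0 * β1 * (π * α) + β0 * (1 - π * α) := by
    have h := tadd X Y hYm; rw [hXY, hXYc] at h; linarith
  have hAXc : (μ (A ∩ Xᶜ)).toReal = α - (β0 * β1 * (π * α) + β0 * (α - π * α)) := by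
    have h := tadd A X hXm; rw [hAX, hα] at h; linarith
  have hXc : (μ Xᶜ).toReal = 1 - (β0 * β1 * (π * α) + β0 * (1 - π * α)) := by
    have h := hadd X hXm; rw [hXv] at h; linarith
  have hD1 : β0 * β1 * (π * α) + β0 * (1 - π * α) ≠ 0 := by
    rw [← hXv]; exact ne_of_gt hX0
  have hD1eq : β0 * β1 * (π * α) + β0 * (1 - π * α)
      = α * (β0 * β1 * π + β0 * (α⁻¹ - π)) := by
    field_simp
  have hD2 : β0 * β1 * π + β0 * (α⁻¹ - π) ≠ 0 := by
    intro h; exact hD1 (by rw [hD1eq, h, mul_zero])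
  have hDc1 : 1 - (β0 * β1 * (π * α) + β0 * (1 - π * α)) ≠ 0 := by
    rw [← hXv]; intro h; nlinarith
  have hDc1eq : 1 - (β0 * β1 * (π * α) + β0 * (1 - π * α))
      = α * ((1 - β0 * β1) * π + (1 - β0) * (α⁻¹ - π)) := by
    field_simp; ring
  have hDc2 : (1 - β0 * β1) * π + (1 - β0) * (α⁻¹ - π) ≠ 0 := by
    intro h; exact hDc1 (by rw [hDc1eq, h, mul_zero])
  constructor
  · rw [cpr, hAX, hXv, div_eq_div_iff hD1 hD2]
    field_simp
  · rw [cpr, hAXc, hXc, div_eq_div_iff hDc1 hDc2]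
    field_simp
    ring
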